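/- Let n ≥ k_1 ≥ k_2 ≥ ... ≥ k_m ≥ 1 and let I_1, ..., I_m be subsets of {1,...,n} with |I_j| = k_j. Then I_1, ..., I_m are the columns (read left to right, each written in increasing order top to bottom) of a semistandard Young tableau if and only if there exists a chain v_1 ≤ v_2 ≤ ... ≤ v_m in Bruhat order on S_n such that v_j({1,...,k_j}) = I_j for all j. -/

import Mathlib

/-- Bruhat order on `S_n`, via the rank-matrix characterization:
`u ≤ v` iff `#([i] ∩ u[j]) ≥ #([i] ∩ v[j])` for all `i, j`. -/
def BruhatLE {n : ℕ} (u v : Equiv.Perm (Fin n)) : Prop :=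
  ∀ i j : ℕ,
    (Finset.univ.filter fun a : Fin n => (a : ℕ) < j ∧ ((v a : ℕ)) < i).card ≤
    (Finset.univ.filter fun a : Fin n => (a : ℕ) < j ∧ ((u a : ℕ)) < i).card

open Finset

section Aux

/-- number of elements of `S` with value `< i` -/
def cntB (n i : ℕ) (S : Finset (Fin n)) : ℕ := (S.filter fun x : Fin n => (x : ℕ) < i).card

lemma cntB_le_card {n i : ℕ} (S : Finset (Fin n)) : cntB n i S ≤ S.card :=
  Finset.card_le_card (Finset.filter_subset _ _)

lemma filter_val_lt_card {n M : ℕ} :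
    ((Finset.univ : Finset (Fin n)).filter fun a : Fin n => (a : ℕ) < M).card = min M n := by
  rcases lt_or_ge M n with hM | hM
  · have h : ((Finset.univ : Finset (Fin n)).filter fun a : Fin n => (a : ℕ) < M)
        = Finset.Iio ⟨M, hM⟩ := by
      ext a; simp [Fin.lt_def]
    rw [h, Fin.card_Iio]
    simp
    omega
  · have h : ((Finset.univ : Finset (Fin n)).filter fun a : Fin n => (a : ℕ) < M)
        = Finset.univ := Finset.filter_true_of_mem fun a _ => lt_of_lt_of_le a.isLt hM
    rw [h, Finset.card_univ, Fintype.card_fin]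
    omega

lemma cntB_add_compl {n : ℕ} (I : Finset (Fin n)) (i : ℕ) :
    cntB n i I + cntB n i Iᶜ = min i n := by
  classical
  rw [cntB, cntB, ← Finset.card_union_of_disjoint
      (Finset.disjoint_filter_filter disjoint_compl_right), ← Finset.filter_union,
    Finset.union_compl]
  exact filter_val_lt_card

lemma filter_val_between_card {n l p : ℕ} :
    ((Finset.univ : Finset (Fin n)).filter fun a : Fin n => l ≤ (a : ℕ) ∧ (a : ℕ) < p).card
      = min p n - min (min p l) n := by
  classical
  have key := Finset.card_filter_add_card_filter_not
    (s := (Finset.univ : Finset (Fin n)).filter fun a : Fin n => (a : ℕ) < p)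
    (p := fun a : Fin n => (a : ℕ) < l)
  rw [Finset.filter_filter, Finset.filter_filter] at key
  have h1 : ((Finset.univ : Finset (Fin n)).filter fun a : Fin n => (a : ℕ) < p ∧ (a : ℕ) < l)
      = (Finset.univ : Finset (Fin n)).filter fun a : Fin n => (a : ℕ) < min p l := by
    apply Finset.filter_congr; intro a _; omega
  have h2 : ((Finset.univ : Finset (Fin n)).filter fun a : Fin n => (a : ℕ) < p ∧ ¬ (a : ℕ) < l)
      = (Finset.univ : Finset (Fin n)).filter fun a : Fin n => l ≤ (a : ℕ) ∧ (a : ℕ) < p := by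
    apply Finset.filter_congr; intro a _; omega
  rw [h1, h2, filter_val_lt_card, filter_val_lt_card] at key
  omega

lemma orderIso_lt_iff {n kk : ℕ} (I : Finset (Fin n)) (h : I.card = kk) (b : Fin kk) (i : ℕ) :
    ((I.orderIsoOfFin h b : Fin n) : ℕ) < i ↔ (b : ℕ) < cntB n i I := by
  classical
  set S := Finset.univ.filter (fun b' : Fin kk => ((I.orderIsoOfFin h b' : Fin n) : ℕ) < i)
    with hS
  have hmemS : ∀ b' : Fin kk, b' ∈ S ↔ ((I.orderIsoOfFin h b' : Fin n) : ℕ) < i := by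
    intro b'; simp only [hS, Finset.mem_filter, Finset.mem_univ, true_and]
  have hdc : ∀ b₁ b₂ : Fin kk, b₁ ≤ b₂ → b₂ ∈ S → b₁ ∈ S := by
    intro b₁ b₂ hle hmem
    rw [hmemS] at hmem ⊢
    have hmono : (I.orderIsoOfFin h b₁ : Fin n) ≤ (I.orderIsoOfFin h b₂ : Fin n) :=
      Subtype.coe_le_coe.mpr ((I.orderIsoOfFin h).monotone hle)
    exact lt_of_le_of_lt (Fin.le_def.mp hmono) hmem
  have hcard : S.card = cntB n i I := by
    apply Finset.card_bij (fun b' _ => (I.orderIsoOfFin h b' : Fin n))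
    · intro b' hb'
      rw [hmemS] at hb'
      exact Finset.mem_filter.mpr ⟨(I.orderIsoOfFin h b').2, hb'⟩
    · intro b₁ _ b₂ _ heq
      exact (I.orderIsoOfFin h).injective (Subtype.coe_injective heq)
    · intro x hx
      rw [Finset.mem_filter] at hx
      refine ⟨(I.orderIsoOfFin h).symm ⟨x, hx.1⟩, ?_, ?_⟩
      · rw [hmemS]
        simp only [OrderIso.apply_symm_apply]
        exact hx.2
      · simp only [OrderIso.apply_symm_apply]
  rw [← hcard]
  constructor
  · intro hlt
    have hsub : Finset.Iic b ⊆ S := fun b' hb' =>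
      hdc b' b (Finset.mem_Iic.mp hb') ((hmemS b).mpr hlt)
    have hc := Finset.card_le_card hsub
    rw [Fin.card_Iic] at hc
    omega
  · intro hlt
    by_contra hge
    have hsub : S ⊆ Finset.Iio b := by
      intro b' hb'
      rw [Finset.mem_Iio]
      by_contra hge'
      exact hge ((hmemS b).mp (hdc b b' (not_lt.mp hge') hb'))
    have hc := Finset.card_le_card hsub
    rw [Fin.card_Iio] at hc
    omega

lemma compl_card {n kk : ℕ} (I : Finset (Fin n)) (h : I.card = kk) : Iᶜ.card = n - kk := by
  rw [Finset.card_compl, h, Fintype.card_fin]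

/-- increasing on `I` for the first `kk` positions, then `Iᶜ` in decreasing order -/
def sspFun (n kk : ℕ) (I : Finset (Fin n)) (h : I.card = kk) (a : Fin n) : Fin n :=
  if ha : (a : ℕ) < kk then (I.orderIsoOfFin h ⟨a, ha⟩ : Fin n)
  else (Iᶜ.orderIsoOfFin (compl_card I h) ⟨n - 1 - a, by
    have := a.isLt
    have hkn : kk ≤ (a : ℕ) := not_lt.mp ha
    omega⟩ : Fin n)

lemma sspFun_inj {n kk : ℕ} (I : Finset (Fin n)) (h : I.card = kk) :
    Function.Injective (sspFun n kk I h) := by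
  intro a b hab
  unfold sspFun at hab
  split_ifs at hab with h1 h2 h2
  · have := (I.orderIsoOfFin h).injective (Subtype.coe_injective hab)
    simpa [Fin.ext_iff] using congrArg Fin.val this
  · exfalso
    have m1 : (I.orderIsoOfFin h ⟨a, h1⟩ : Fin n) ∈ I := (I.orderIsoOfFin h _).2
    have m2 : ∀ x : Fin (n - kk), (Iᶜ.orderIsoOfFin (compl_card I h) x : Fin n) ∉ I :=
      fun x => Finset.mem_compl.mp (Iᶜ.orderIsoOfFin _ x).2
    rw [hab] at m1
    exact m2 _ m1
  · exfalso
    have m1 : (I.orderIsoOfFin h ⟨b, h2⟩ : Fin n) ∈ I := (I.orderIsoOfFin h _).2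
    have m2 : ∀ x : Fin (n - kk), (Iᶜ.orderIsoOfFin (compl_card I h) x : Fin n) ∉ I :=
      fun x => Finset.mem_compl.mp (Iᶜ.orderIsoOfFin _ x).2
    rw [← hab] at m1
    exact m2 _ m1
  · have := (Iᶜ.orderIsoOfFin (compl_card I h)).injective (Subtype.coe_injective hab)
    have h3 : n - 1 - (a : ℕ) = n - 1 - (b : ℕ) := by
      simpa [Fin.ext_iff] using congrArg Fin.val this
    have ha' := a.isLt
    have hb' := b.isLt
    exact Fin.ext (by omega)

noncomputable def sspPerm (n kk : ℕ) (I : Finset (Fin n)) (h : I.card = kk) :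
    Equiv.Perm (Fin n) :=
  Equiv.ofBijective _ (Finite.injective_iff_bijective.mp (sspFun_inj I h))

lemma sspPerm_apply {n kk : ℕ} (I : Finset (Fin n)) (h : I.card = kk) (a : Fin n) :
    sspPerm n kk I h a = sspFun n kk I h a := rfl

lemma sspPerm_image {n kk : ℕ} (I : Finset (Fin n)) (h : I.card = kk) (hkn : kk ≤ n) :
    (Finset.univ.filter fun a : Fin n => (a : ℕ) < kk).image (sspPerm n kk I h) = I := by
  apply Finset.eq_of_subset_of_card_le
  · intro x hx
    rw [Finset.mem_image] at hx
    obtain ⟨a, ha, rfl⟩ := hx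
    rw [Finset.mem_filter] at ha
    rw [sspPerm_apply, sspFun, dif_pos ha.2]
    exact (I.orderIsoOfFin h _).2
  · rw [Finset.card_image_of_injective _ (sspPerm n kk I h).injective,
      filter_val_lt_card, h]
    omega

lemma count_sspPerm {n kk : ℕ} (I : Finset (Fin n)) (h : I.card = kk) (i p : ℕ) :
    (Finset.univ.filter fun a : Fin n =>
        (a : ℕ) < p ∧ ((sspPerm n kk I h a : ℕ)) < i).card
      = min (min (min p (cntB n i I)) kk) n
        + (min p n - min (min p (n - cntB n i Iᶜ)) n) := by
  classical
  have hkn : kk ≤ n := by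
    rw [← h]
    simpa using Finset.card_le_univ I
  have hcnk : cntB n i Iᶜ ≤ n - kk := (compl_card I h) ▸ cntB_le_card Iᶜ
  have key := Finset.card_filter_add_card_filter_not
    (s := Finset.univ.filter fun a : Fin n =>
      (a : ℕ) < p ∧ ((sspPerm n kk I h a : ℕ)) < i)
    (p := fun a : Fin n => (a : ℕ) < kk)
  rw [Finset.filter_filter, Finset.filter_filter] at key
  have h1 : (Finset.univ.filter fun a : Fin n =>
        ((a : ℕ) < p ∧ ((sspPerm n kk I h a : ℕ)) < i) ∧ (a : ℕ) < kk)
      = Finset.univ.filter fun a : Fin n => (a : ℕ) < min (min p (cntB n i I)) kk := by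
    apply Finset.filter_congr
    intro a _
    constructor
    · rintro ⟨⟨hap, hai⟩, hak⟩
      rw [sspPerm_apply, sspFun, dif_pos hak, orderIso_lt_iff] at hai
      have : (a : ℕ) < cntB n i I := hai
      omega
    · intro hmin
      have hak : (a : ℕ) < kk := lt_of_lt_of_le hmin (by omega)
      refine ⟨⟨by omega, ?_⟩, hak⟩
      rw [sspPerm_apply, sspFun, dif_pos hak, orderIso_lt_iff]
      show (a : ℕ) < cntB n i I
      omega
  have h2 : (Finset.univ.filter fun a : Fin n =>
        ((a : ℕ) < p ∧ ((sspPerm n kk I h a : ℕ)) < i) ∧ ¬ (a : ℕ) < kk)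
      = Finset.univ.filter fun a : Fin n =>
          (n - cntB n i Iᶜ) ≤ (a : ℕ) ∧ (a : ℕ) < p := by
    apply Finset.filter_congr
    intro a _
    have han := a.isLt
    constructor
    · rintro ⟨⟨hap, hai⟩, hak⟩
      rw [sspPerm_apply, sspFun, dif_neg hak, orderIso_lt_iff] at hai
      have : n - 1 - (a : ℕ) < cntB n i Iᶜ := hai
      omega
    · rintro ⟨hla, hap⟩
      have hak : ¬ (a : ℕ) < kk := by omega
      refine ⟨⟨hap, ?_⟩, hak⟩
      rw [sspPerm_apply, sspFun, dif_neg hak, orderIso_lt_iff]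
      show n - 1 - (a : ℕ) < cntB n i Iᶜ
      omega
  rw [h1, h2, filter_val_lt_card, filter_val_between_card] at key
  omega

lemma bruhat_step {n kA kB : ℕ} (A B : Finset (Fin n)) (hA : A.card = kA) (hB : B.card = kB)
    (hkk : kB ≤ kA) (hcc : ∀ i, cntB n i B ≤ cntB n i A) :
    BruhatLE (sspPerm n kA A hA) (sspPerm n kB B hB) := by
  intro i p
  rw [count_sspPerm, count_sspPerm]
  have hkn : kA ≤ n := by
    rw [← hA]; simpa using Finset.card_le_univ A
  have hxk : cntB n i A ≤ kA := hA ▸ cntB_le_card A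
  have hyk : cntB n i B ≤ kB := hB ▸ cntB_le_card B
  have hcx : cntB n i Aᶜ ≤ n - kA := (compl_card A hA) ▸ cntB_le_card Aᶜ
  have hcy : cntB n i Bᶜ ≤ n - kB := (compl_card B hB) ▸ cntB_le_card Bᶜ
  have h1 := cntB_add_compl A i
  have h2 := cntB_add_compl B i
  have hyx := hcc i
  omega

lemma bridge {n kA kB : ℕ} (A B : Finset (Fin n)) (hA : A.card = kA) (hB : B.card = kB)
    (hkk : kB ≤ kA) :
    (∀ (a : ℕ) (ha : a < kB),
        (A.orderIsoOfFin hA ⟨a, lt_of_lt_of_le ha hkk⟩).1 ≤ (B.orderIsoOfFin hB ⟨a, ha⟩).1)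
      ↔ ∀ i, cntB n i B ≤ cntB n i A := by
  constructor
  · intro hs i
    rcases Nat.eq_zero_or_pos (cntB n i B) with h0 | h0
    · omega
    have hyB : cntB n i B ≤ kB := hB ▸ cntB_le_card B
    have ha : cntB n i B - 1 < kB := by omega
    have hBlt : ((B.orderIsoOfFin hB ⟨cntB n i B - 1, ha⟩ : Fin n) : ℕ) < i := by
      rw [orderIso_lt_iff]
      show cntB n i B - 1 < cntB n i B
      omega
    have hAle := Fin.le_def.mp (hs (cntB n i B - 1) ha)
    have hAlt : ((A.orderIsoOfFin hA ⟨cntB n i B - 1, lt_of_lt_of_le ha hkk⟩ : Fin n) : ℕ) < i :=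
      lt_of_le_of_lt hAle hBlt
    rw [orderIso_lt_iff] at hAlt
    have : cntB n i B - 1 < cntB n i A := hAlt
    omega
  · intro hc a ha
    set i := ((B.orderIsoOfFin hB ⟨a, ha⟩ : Fin n) : ℕ) + 1 with hi
    have h1 : a < cntB n i B :=
      (orderIso_lt_iff B hB ⟨a, ha⟩ i).mp (Nat.lt_succ_self _)
    have h2 : a < cntB n i A := lt_of_lt_of_le h1 (hc i)
    have h3 := (orderIso_lt_iff A hA ⟨a, lt_of_lt_of_le ha hkk⟩ i).mpr h2
    exact Fin.le_def.mpr (by omega)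

end Aux

/-- Let `n ≥ k 0 ≥ k 1 ≥ ⋯ ≥ k (m-1) ≥ 1` and let `I j` be subsets of `{1,…,n}`
(modelled as `Fin n`) with `(I j).card = k j`.  Then the `I j` are the columns of a
semistandard Young tableau (the condition that rows weakly increase across
consecutive columns) iff there is a chain `v_1 ≤ v_2 ≤ ⋯ ≤ v_m` in Bruhat order with
`v_j({1,…,k_j}) = I_j` for all `j`. -/
theorem stmt5 (n m : ℕ) (k : Fin m → ℕ)
    (hk : ∀ j, 1 ≤ k j ∧ k j ≤ n)
    (hdec : ∀ j j' : Fin m, j ≤ j' → k j' ≤ k j)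
    (I : Fin m → Finset (Fin n)) (hcard : ∀ j, (I j).card = k j) :
    (∀ (j : ℕ) (hj : j + 1 < m) (a : ℕ) (ha : a < k ⟨j + 1, hj⟩),
        ((I ⟨j, by omega⟩).orderIsoOfFin (hcard ⟨j, by omega⟩)
            ⟨a, lt_of_lt_of_le ha
              (hdec ⟨j, by omega⟩ ⟨j + 1, hj⟩ (Fin.mk_le_mk.mpr (Nat.le_succ j)))⟩).1 ≤
          ((I ⟨j + 1, hj⟩).orderIsoOfFin (hcard ⟨j + 1, hj⟩) ⟨a, ha⟩).1) ↔
      (∃ v : Fin m → Equiv.Perm (Fin n),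
        (∀ (j : ℕ) (hj : j + 1 < m), BruhatLE (v ⟨j, by omega⟩) (v ⟨j + 1, hj⟩)) ∧
        ∀ j : Fin m,
          (Finset.univ.filter fun a : Fin n => (a : ℕ) < k j).image (v j) = I j) := by
  constructor
  · intro hssyt
    refine ⟨fun j => sspPerm n (k j) (I j) (hcard j), ?_, ?_⟩
    · intro j hj
      have hkk : k ⟨j + 1, hj⟩ ≤ k ⟨j, by omega⟩ :=
        hdec ⟨j, by omega⟩ ⟨j + 1, hj⟩ (Fin.mk_le_mk.mpr (Nat.le_succ j))
      apply bruhat_step _ _ _ _ hkk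
      rw [← bridge (I ⟨j, by omega⟩) (I ⟨j + 1, hj⟩) (hcard _) (hcard _) hkk]
      exact hssyt j hj
    · intro j
      exact sspPerm_image _ _ (hk j).2
  · rintro ⟨v, hchain, himg⟩ j hj a ha
    have hkk : k ⟨j + 1, hj⟩ ≤ k ⟨j, by omega⟩ :=
      hdec ⟨j, by omega⟩ ⟨j + 1, hj⟩ (Fin.mk_le_mk.mpr (Nat.le_succ j))
    refine (bridge (I ⟨j, by omega⟩) (I ⟨j + 1, hj⟩) (hcard _) (hcard _) hkk).mpr ?_ a ha
    intro i
    have ecount : ∀ jj : Fin m, cntB n i (I jj)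
        = (Finset.univ.filter fun a : Fin n => (a : ℕ) < k jj ∧ ((v jj a : ℕ)) < i).card := by
      intro jj
      rw [cntB, ← himg jj]
      rw [Finset.filter_image, Finset.filter_filter,
        Finset.card_image_of_injective _ (v jj).injective]
    rw [ecount ⟨j, by omega⟩, ecount ⟨j + 1, hj⟩]
    calc (Finset.univ.filter fun a : Fin n =>
            (a : ℕ) < k ⟨j + 1, hj⟩ ∧ ((v ⟨j + 1, hj⟩ a : ℕ)) < i).card
        ≤ (Finset.univ.filter fun a : Fin n =>
            (a : ℕ) < k ⟨j + 1, hj⟩ ∧ ((v ⟨j, by omega⟩ a : ℕ)) < i).card :=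
          hchain j hj i (k ⟨j + 1, hj⟩)
      _ ≤ (Finset.univ.filter fun a : Fin n =>
            (a : ℕ) < k ⟨j, by omega⟩ ∧ ((v ⟨j, by omega⟩ a : ℕ)) < i).card := by
          apply Finset.card_le_card
          apply Finset.monotone_filter_right
          intro x _ hx
          exact ⟨lt_of_lt_of_le hx.1 hkk, hx.2⟩
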